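/- In Cl_5, for all real numbers μ₁₂, μ₁₃, the element x = μ₁₂ • (e₄*e₁*e₂) + μ₁₃ • (e₅*e₁*e₃) is a unit of Cl_5 if and only if μ₁₂² ≠ μ₁₃². (x is 4× the invariant Dirac operator of the metric nilpotent Lie algebra 𝒩₅,₅ = (0,0,0,12,13) with de⁴ = μ₁₂ e¹², de⁵ = μ₁₃ e¹³; such a metric carries a left-invariant harmonic spinor exactly when μ₁₂ = ±μ₁₃, as asserted in the paper's Theorem on 5-dimensional nilmanifolds.) -/

import Mathlib

open scoped BigOperators

/-- The negative-definite quadratic form `Q v = -∑ i, (v i)^2` on `EuclideanSpace ℝ (Fin n)`. -/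
noncomputable def Q (n : ℕ) : QuadraticForm ℝ (EuclideanSpace ℝ (Fin n)) :=
  QuadraticMap.ofPolar (fun v => -∑ i, v i ^ 2)
    (fun a v => by
      simp only [PiLp.smul_apply, smul_eq_mul, mul_pow]
      rw [← Finset.mul_sum]
      ring)
    (fun x x' y => by
      have h : ∀ (u w : EuclideanSpace ℝ (Fin n)),
          QuadraticMap.polar (fun v : EuclideanSpace ℝ (Fin n) => -∑ i, v i ^ 2) u w
            = -(2 * ∑ i, u i * w i) := by
        intro u w
        have hsq : ∀ i, (u i + w i) ^ 2 = u i ^ 2 + w i ^ 2 + 2 * (u i * w i) := fun i => by ring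
        simp_rw [QuadraticMap.polar, PiLp.add_apply, hsq, Finset.sum_add_distrib,
          ← Finset.mul_sum]
        ring
      simp_rw [h, PiLp.add_apply, add_mul, Finset.sum_add_distrib]
      ring)
    (fun a x y => by
      have h : ∀ (u w : EuclideanSpace ℝ (Fin n)),
          QuadraticMap.polar (fun v : EuclideanSpace ℝ (Fin n) => -∑ i, v i ^ 2) u w
            = -(2 * ∑ i, u i * w i) := by
        intro u w
        have hsq : ∀ i, (u i + w i) ^ 2 = u i ^ 2 + w i ^ 2 + 2 * (u i * w i) := fun i => by ring
        simp_rw [QuadraticMap.polar, PiLp.add_apply, hsq, Finset.sum_add_distrib,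
          ← Finset.mul_sum]
        ring
      simp_rw [h, PiLp.smul_apply, smul_eq_mul, mul_assoc, ← Finset.mul_sum]
      ring)

/-- The image in the Clifford algebra `Cl_n` of the `i`-th standard basis vector. -/
noncomputable def e {n : ℕ} (i : Fin n) : CliffordAlgebra (Q n) :=
  CliffordAlgebra.ι (Q n) (EuclideanSpace.single i 1)

lemma Q_apply (n : ℕ) (v : EuclideanSpace ℝ (Fin n)) : Q n v = -∑ i, v i ^ 2 := rfl

lemma polar_Q (n : ℕ) (u w : EuclideanSpace ℝ (Fin n)) :
    QuadraticMap.polar (Q n) u w = -(2 * ∑ i, u i * w i) := by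
  have hsq : ∀ i, (u i + w i) ^ 2 = u i ^ 2 + w i ^ 2 + 2 * (u i * w i) := fun i => by ring
  simp_rw [QuadraticMap.polar, Q_apply, PiLp.add_apply, hsq, Finset.sum_add_distrib,
    ← Finset.mul_sum]
  ring

lemma e_sq {n : ℕ} (i : Fin n) : e i * e i = -1 := by
  rw [e, CliffordAlgebra.ι_sq_scalar, Q_apply]
  have : ∑ k, (EuclideanSpace.single i (1:ℝ)) k ^ 2 = 1 := by
    simp [EuclideanSpace.single_apply]
  rw [this]
  simp

lemma e_anti {n : ℕ} {i j : Fin n} (h : i ≠ j) : e i * e j = -(e j * e i) := by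
  have := CliffordAlgebra.ι_mul_ι_add_swap (Q := Q n)
    (EuclideanSpace.single i 1) (EuclideanSpace.single j 1)
  rw [polar_Q] at this
  have hz : ∑ k, (EuclideanSpace.single i (1:ℝ)) k * (EuclideanSpace.single j (1:ℝ)) k = 0 := by
    simp [EuclideanSpace.single_apply, Finset.sum_ite_eq, h.symm]
  rw [hz] at this
  simp only [mul_zero, neg_zero, map_zero] at this
  rw [e, e]
  exact eq_neg_of_add_eq_zero_left this

lemma e_sq_mul {n : ℕ} (i : Fin n) (z : CliffordAlgebra (Q n)) : e i * (e i * z) = -z := by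
  rw [← mul_assoc, e_sq, neg_one_mul]

lemma e_swap {n : ℕ} {i j : Fin n} (h : j < i) : e i * e j = -(e j * e i) :=
  e_anti h.ne'

lemma e_swap_mul {n : ℕ} {i j : Fin n} (h : j < i) (z : CliffordAlgebra (Q n)) :
    e i * (e j * z) = -(e j * (e i * z)) := by
  rw [← mul_assoc, e_anti h.ne', neg_mul, mul_assoc]


section Main
local notation "A" => (e 3 * e 0 * e 1 : CliffordAlgebra (Q 5))
local notation "B" => (e 4 * e 0 * e 2 : CliffordAlgebra (Q 5))
local notation "P" => (e 1 * (e 2 * (e 3 * e 4)) : CliffordAlgebra (Q 5))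

set_option maxHeartbeats 1000000

lemma hAA : A * A = 1 := by
  simp (disch := decide) only [mul_assoc, e_swap_mul, e_sq_mul, e_swap, e_sq,
    mul_neg, neg_mul, neg_neg, mul_one, one_mul]

lemma hBB : B * B = 1 := by
  simp (disch := decide) only [mul_assoc, e_swap_mul, e_sq_mul, e_swap, e_sq,
    mul_neg, neg_mul, neg_neg, mul_one, one_mul]

lemma hAB : A * B = P := by
  simp (disch := decide) only [mul_assoc, e_swap_mul, e_sq_mul, e_swap, e_sq,
    mul_neg, neg_mul, neg_neg, mul_one, one_mul]

lemma hBA : B * A = P := by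
  simp (disch := decide) only [mul_assoc, e_swap_mul, e_sq_mul, e_swap, e_sq,
    mul_neg, neg_mul, neg_neg, mul_one, one_mul]

lemma hPanti : e 1 * P = -(P * e 1) := by
  simp (disch := decide) only [mul_assoc, e_swap_mul, e_sq_mul, e_swap, e_sq,
    mul_neg, neg_mul, neg_neg, mul_one, one_mul]

/-- **The `𝒩₅,₅` case.** In `Cl₅`, `x = μ₁₂ • (e₄e₁e₂) + μ₁₃ • (e₅e₁e₃)` is a unit iff
`μ₁₂² ≠ μ₁₃²`. -/
theorem clifford_N55_dirac (μ₁₂ μ₁₃ : ℝ) (x : CliffordAlgebra (Q 5))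
    (hx : x = μ₁₂ • (e (3 : Fin 5) * e 0 * e 1) + μ₁₃ • (e (4 : Fin 5) * e 0 * e 2)) :
    IsUnit x ↔ μ₁₂ ^ 2 ≠ μ₁₃ ^ 2 := by
  set y : CliffordAlgebra (Q 5) := μ₁₂ • A - μ₁₃ • B with hy
  have key1 : x * y = (μ₁₂ ^ 2 - μ₁₃ ^ 2) • 1 := by
    rw [hx, hy, add_mul, mul_sub, mul_sub, smul_mul_smul_comm, smul_mul_smul_comm,
      smul_mul_smul_comm, smul_mul_smul_comm, hAA, hBB, hAB, hBA]
    module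
  have key2 : y * x = (μ₁₂ ^ 2 - μ₁₃ ^ 2) • 1 := by
    rw [hx, hy, sub_mul, mul_add, mul_add, smul_mul_smul_comm, smul_mul_smul_comm,
      smul_mul_smul_comm, smul_mul_smul_comm, hAA, hBB, hAB, hBA]
    module
  constructor
  · intro hu hc
    have h0 : x * y = 0 := by rw [key1, hc, sub_self, zero_smul]
    have hy0 : y = 0 := hu.mul_left_cancel (by rw [mul_zero]; exact h0)
    have hE : μ₁₂ • A = μ₁₃ • B := sub_eq_zero.mp hy0
    have h1 : μ₁₂ • P = μ₁₃ • (1 : CliffordAlgebra (Q 5)) := by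
      calc μ₁₂ • P = (μ₁₂ • A) * B := by rw [smul_mul_assoc, hAB]
        _ = (μ₁₃ • B) * B := by rw [hE]
        _ = μ₁₃ • (1 : CliffordAlgebra (Q 5)) := by rw [smul_mul_assoc, hBB]
    have h2 : μ₁₃ • (e 1 : CliffordAlgebra (Q 5)) = -(μ₁₃ • (e 1 : CliffordAlgebra (Q 5))) := by
      have l : e 1 * (μ₁₂ • P) = e 1 * (μ₁₃ • (1 : CliffordAlgebra (Q 5))) := by rw [h1]
      have r : (μ₁₂ • P) * e 1 = (μ₁₃ • (1 : CliffordAlgebra (Q 5))) * e 1 := by rw [h1]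
      simp only [mul_smul_comm, smul_mul_assoc, mul_one, one_mul] at l r
      rw [hPanti, smul_neg, r] at l
      exact l.symm
    have h4 : (μ₁₃ + μ₁₃) • (e 1 : CliffordAlgebra (Q 5)) = 0 := by
      rw [add_smul]
      nth_rewrite 2 [h2]
      exact add_neg_cancel _
    have h5 : (μ₁₃ + μ₁₃) • (1 : CliffordAlgebra (Q 5)) = 0 := by
      have := congrArg (· * (e 1 : CliffordAlgebra (Q 5))) h4
      simp only [smul_mul_assoc, zero_mul, e_sq, smul_neg] at this
      rw [← neg_zero] at this
      exact neg_injective this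
    have h6 : μ₁₃ = 0 := by
      rcases smul_eq_zero.mp h5 with h | h
      · linarith
      · exact absurd h one_ne_zero
    have h7 : μ₁₂ = 0 := by
      have : μ₁₂ ^ 2 = 0 := by rw [hc, h6]; ring
      exact pow_eq_zero_iff (by norm_num) |>.mp this
    have hx0 : x = 0 := by rw [hx, h6, h7, zero_smul, zero_smul, add_zero]
    exact not_isUnit_zero (hx0 ▸ hu)
  · intro hne
    have hc : μ₁₂ ^ 2 - μ₁₃ ^ 2 ≠ 0 := sub_ne_zero.mpr hne
    refine ⟨⟨x, (μ₁₂ ^ 2 - μ₁₃ ^ 2)⁻¹ • y, ?_, ?_⟩, rfl⟩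
    · rw [mul_smul_comm, key1, smul_smul, inv_mul_cancel₀ hc, one_smul]
    · rw [smul_mul_assoc, key2, smul_smul, inv_mul_cancel₀ hc, one_smul]

end Main
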